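/- Let (F, G) be a Frobenius pair between abelian categories with enough projectives, and assume G is a separable functor. If the class of Gorenstein projective objects is precovering in C, then the class of Gorenstein projective objects is precovering in D. -/

import Mathlib

open CategoryTheory Limits

/-- An object `M` of an abelian category is *Gorenstein projective* if it is a syzygy
(the kernel `ker(P⁰ → P¹)`) of an acyclic complex `P` of projective objects such that
`Hom(P, Q)` is acyclic for every projective `Q`. -/
def IsGorensteinProjective {A : Type*} [Category A] [Abelian A] (M : A) : Prop :=
  ∃ P : CochainComplex A ℤ,
    (∀ n : ℤ, Projective (P.X n)) ∧
    (∀ n : ℤ, P.ExactAt n) ∧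
    Nonempty (M ≅ P.cycles 0) ∧
    ∀ (Q : A), Projective Q → ∀ (n : ℤ) (f : P.X n ⟶ Q), P.d (n - 1) n ≫ f = 0 →
      ∃ g : P.X (n + 1) ⟶ Q, P.d n (n + 1) ≫ g = f

/-- `φ : X ⟶ M` is an `𝒳`-precover of `M` if `X ∈ 𝒳` and every morphism from an object
of `𝒳` to `M` factors through `φ`. -/
def IsPrecover {A : Type*} [Category A] (𝒳 : A → Prop) {X M : A} (φ : X ⟶ M) : Prop :=
  𝒳 X ∧ ∀ (X' : A), 𝒳 X' → ∀ f : X' ⟶ M, ∃ g : X' ⟶ X, g ≫ φ = f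

/-- A functor with adjoints on both sides preserves Gorenstein projective objects. -/
lemma isGorensteinProjective_map {C D : Type*} [Category C] [Category D]
    [Abelian C] [Abelian D]
    (F : C ⥤ D) (G : D ⥤ C) [F.Additive] [G.Additive]
    (adj₁ : F ⊣ G) (adj₂ : G ⊣ F) {M : C} (hM : IsGorensteinProjective M) :
    IsGorensteinProjective (F.obj M) := by
  obtain ⟨P, hproj, hex, ⟨e⟩, hlift⟩ := hM
  haveI : PreservesColimitsOfSize.{0, 0} F := adj₁.leftAdjoint_preservesColimits
  haveI : PreservesLimitsOfSize.{0, 0} F := adj₂.rightAdjoint_preservesLimits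
  haveI : PreservesColimitsOfSize.{0, 0} G := adj₂.leftAdjoint_preservesColimits
  haveI : PreservesFiniteLimits F := PreservesLimitsOfSize.preservesFiniteLimits F
  haveI : PreservesFiniteColimits F := PreservesColimitsOfSize.preservesFiniteColimits F
  haveI : G.PreservesEpimorphisms := inferInstance
  haveI : F.PreservesHomology := inferInstance
  let FP := (F.mapHomologicalComplex (ComplexShape.up ℤ)).obj P
  have hsc : ∀ n : ℤ, FP.sc n ≅ (P.sc n).map F := fun n =>
    ShortComplex.isoMk (Iso.refl _) (Iso.refl _) (Iso.refl _)
      (by simp [FP]; exact (Category.id_comp _).trans (Category.comp_id _).symm)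
      (by simp [FP]; exact (Category.id_comp _).trans (Category.comp_id _).symm)
  refine ⟨FP, fun n => adj₁.map_projective _ (hproj n), fun n => ?_, ?_, ?_⟩
  · rw [HomologicalComplex.exactAt_iff]
    exact ShortComplex.exact_of_iso (hsc n).symm ((hex n).map F)
  · refine ⟨F.mapIso e ≪≫ ((P.sc 0).mapCyclesIso F).symm ≪≫
      ShortComplex.cyclesMapIso (hsc 0).symm⟩
  · intro Q hQ n (f : F.obj (P.X n) ⟶ Q) hf
    have hGQ : Projective (G.obj Q) := adj₂.map_projective Q hQ
    have hd : (P.d (n - 1) n) ≫ adj₁.homEquiv _ _ f = 0 := by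
      rw [← Adjunction.homEquiv_naturality_left]
      have : F.map (P.d (n - 1) n) ≫ f = 0 := by
        exact hf
      rw [this]
      simp [Adjunction.homEquiv_unit]
    obtain ⟨g, hg⟩ := hlift (G.obj Q) hGQ n (adj₁.homEquiv _ _ f) hd
    refine ⟨(adj₁.homEquiv _ _).symm g, ?_⟩
    have : FP.d n (n + 1) = F.map (P.d n (n + 1)) := by simp [FP]; rfl
    show F.map (P.d n (n + 1)) ≫ (adj₁.homEquiv _ _).symm g = f
    rw [← Adjunction.homEquiv_naturality_left_symm, hg, Equiv.symm_apply_apply]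

/-- If `(F, G)` is a Frobenius pair between abelian categories with enough projectives,
`G` is separable (the counit of `F ⊣ G` has a natural section), and the Gorenstein
projective objects are precovering in `C`, then they are precovering in `D`. -/
theorem gp_precovering_of_separable_right {C D : Type*} [Category C] [Category D]
    [Abelian C] [Abelian D] [EnoughProjectives C] [EnoughProjectives D]
    (F : C ⥤ D) (G : D ⥤ C) [F.Additive] [G.Additive]
    (adj₁ : F ⊣ G) (adj₂ : G ⊣ F)
    (hsep : ∃ ξ : 𝟭 D ⟶ G ⋙ F, ξ ≫ adj₁.counit = 𝟙 (𝟭 D))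
    (hC : ∀ M : C, ∃ (X : C) (φ : X ⟶ M), IsPrecover (IsGorensteinProjective (A := C)) φ) :
    ∀ N : D, ∃ (Y : D) (φ : Y ⟶ N), IsPrecover (IsGorensteinProjective (A := D)) φ := by
  obtain ⟨ξ, hξ⟩ := hsep
  intro N
  obtain ⟨X, φ, hφX, hφ⟩ := hC (G.obj N)
  refine ⟨F.obj X, F.map φ ≫ adj₁.counit.app N,
    isGorensteinProjective_map F G adj₁ adj₂ hφX, ?_⟩
  intro Y' hY' f
  obtain ⟨g, hg⟩ := hφ (G.obj Y') (isGorensteinProjective_map G F adj₂ adj₁ hY') (G.map f)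
  refine ⟨ξ.app Y' ≫ F.map g, ?_⟩
  have h1 : ξ.app Y' ≫ adj₁.counit.app Y' = 𝟙 Y' := congrArg (fun α => α.app Y') hξ
  rw [Category.assoc, ← Category.assoc (F.map g), ← F.map_comp, hg,
    adj₁.counit_naturality, ← Category.assoc, h1, Category.id_comp]
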